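/- Let φ : 𝒜 → ℬ be an additive bijection between standard operator algebras on complex Banach spaces satisfying φ(ABA) = φ(A)φ(B)φ(A) for all A, B ∈ 𝒜. Then φ is either a ring homomorphism, a ring antihomomorphism, the negative of a ring homomorphism, or the negative of a ring antihomomorphism. -/

import Mathlib

set_option synthInstance.maxHeartbeats 1000000
set_option maxHeartbeats 1000000

section Herstein
variable {R S : Type*} [Ring R] [Ring S] (ψ : R → S)
  (hadd : ∀ a b : R, ψ (a + b) = ψ a + ψ b)

include hadd

theorem herstein_lin (htriple : ∀ a b : R, ψ (a * b * a) = ψ a * ψ b * ψ a)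
    (a b c : R) : ψ (a*b*c + c*b*a) = ψ a * ψ b * ψ c + ψ c * ψ b * ψ a := by
  have key := htriple (a + c) b
  rw [show (a+c)*b*(a+c) = a*b*a + (a*b*c + c*b*a) + c*b*c by noncomm_ring,
    hadd, hadd, htriple, htriple, hadd a c] at key
  have h2 : ψ (a*b*c + c*b*a)
      = (ψ a + ψ c) * ψ b * (ψ a + ψ c) - ψ a * ψ b * ψ a - ψ c * ψ b * ψ c := by
    rw [← key]; abel
  rw [h2]; noncomm_ring

theorem my_bresar
    (hone : ψ 1 = 1)
    (htriple : ∀ a b : R, ψ (a * b * a) = ψ a * ψ b * ψ a)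
    (hsurj : Function.Surjective ψ)
    (hprime : ∀ a b : S, (∀ x : S, a * x * b = 0) → a = 0 ∨ b = 0)
    (htor : ∀ a : S, a + a = 0 → a = 0) :
    (∀ a b : R, ψ (a*b) = ψ a * ψ b) ∨ (∀ a b : R, ψ (a*b) = ψ b * ψ a) := by
  have hlin := herstein_lin ψ hadd htriple
  -- Jordan: ψ(ab) + ψ(ba) = ψa ψb + ψb ψa
  have hJ : ∀ a b : R, ψ (a*b) + ψ (b*a) = ψ a * ψ b + ψ b * ψ a := by
    intro a b
    have := hlin a 1 b
    simp only [mul_one, one_mul, hone] at this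
    rwa [hadd] at this
  -- identity (ii)
  have hii : ∀ a b x : R,
      ψ (a*b) * ψ x * ψ (b*a) + ψ (b*a) * ψ x * ψ (a*b)
        = (ψ a * ψ b) * ψ x * (ψ b * ψ a) + (ψ b * ψ a) * ψ x * (ψ a * ψ b) := by
    intro a b x
    have h1 := hlin (a*b) x (b*a)
    have h2 : ψ (a*b*x*(b*a) + b*a*x*(a*b)) = ψ (a*(b*x*b)*a) + ψ (b*(a*x*a)*b) := by
      rw [← hadd]; congr 1; noncomm_ring
    rw [htriple, htriple, htriple, htriple] at h2
    rw [← h1, h2]; noncomm_ring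
  -- anticommuting relation
  have anti : ∀ a b : R, ∀ z : S,
      (ψ (a*b) - ψ a * ψ b) * z * (ψ (a*b) - ψ b * ψ a)
        = -((ψ (a*b) - ψ b * ψ a) * z * (ψ (a*b) - ψ a * ψ b)) := by
    intro a b z
    obtain ⟨x, rfl⟩ := hsurj z
    set p := ψ (a*b); set q := ψ (b*a); set s := ψ a * ψ b; set t := ψ b * ψ a
    have e1 : q = s + t - p := by rw [← hJ a b]; abel
    have e2 := hii a b x
    rw [show (ψ a * ψ b) * ψ x * (ψ b * ψ a) + (ψ b * ψ a) * ψ x * (ψ a * ψ b)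
        = s * ψ x * t + t * ψ x * s from rfl] at e2
    have e3 : (p - s) * ψ x * (p - t) + (p - t) * ψ x * (p - s)
        = (s * ψ x * t + t * ψ x * s) - (p * ψ x * q + q * ψ x * p) := by
      rw [e1]; noncomm_ring
    rw [← e2] at e3
    have e4 : (p - s) * ψ x * (p - t) + (p - t) * ψ x * (p - s) = 0 := by
      rw [e3]; abel
    exact eq_neg_of_add_eq_zero_left e4
  -- pointwise dichotomy
  have key : ∀ a b : R, ψ (a*b) = ψ a * ψ b ∨ ψ (a*b) = ψ b * ψ a := by
    intro a b
    set A := ψ (a*b) - ψ a * ψ b with hA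
    set B := ψ (a*b) - ψ b * ψ a with hB
    have hanti : ∀ z : S, A * z * B = -(B * z * A) := anti a b
    have hzero : ∀ z y : S, A * z * A * y * B = 0 := by
      intro z y
      have e1 := hanti (z * A * y)
      have hBzA : B * z * A = -(A * z * B) := by rw [hanti z, neg_neg]
      have hByA : B * y * A = -(A * y * B) := by rw [hanti y, neg_neg]
      have step : B * (z * A * y) * A = A * z * (A * y * B) := by
        calc B * (z * A * y) * A = (B * z * A) * y * A := by noncomm_ring
          _ = (-(A * z * B)) * y * A := by rw [hBzA]
          _ = -(A * z * (B * y * A)) := by noncomm_ring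
          _ = -(A * z * (-(A * y * B))) := by rw [hByA]
          _ = A * z * (A * y * B) := by noncomm_ring
      rw [step] at e1
      have e2 : A * (z * A * y) * B = A * z * (A * y * B) := by noncomm_ring
      rw [e2] at e1
      have e3 : A * z * (A * y * B) + A * z * (A * y * B) = 0 := by
        nth_rewrite 2 [e1]; abel
      have := htor _ e3
      calc A * z * A * y * B = A * z * (A * y * B) := by noncomm_ring
        _ = 0 := this
    by_cases hBz : B = 0
    · right
      have : ψ (a*b) - ψ b * ψ a = 0 := hBz
      rw [sub_eq_zero] at this; exact this
    · left
      have hAz : ∀ z : S, A * z * A = 0 := by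
        intro z
        rcases hprime (A * z * A) B (fun y => hzero z y) with h | h
        · exact h
        · exact absurd h hBz
      rcases hprime A A hAz with h | h <;>
        · rw [hA, sub_eq_zero] at h; exact h
  -- union of subgroups, step 1: fix a
  have step1 : ∀ a : R, (∀ b : R, ψ (a*b) = ψ a * ψ b) ∨ (∀ b : R, ψ (a*b) = ψ b * ψ a) := by
    intro a
    by_contra hcon
    push_neg at hcon
    obtain ⟨⟨b, hb⟩, ⟨c, hc⟩⟩ := hcon
    have hb' : ψ (a*b) = ψ b * ψ a := (key a b).resolve_left hb
    have hc' : ψ (a*c) = ψ a * ψ c := (key a c).resolve_right hc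
    have hsum : ψ (a*(b+c)) = ψ b * ψ a + ψ a * ψ c := by
      rw [show a*(b+c) = a*b + a*c by noncomm_ring, hadd, hb', hc']
    rcases key a (b+c) with h | h
    · rw [hsum, hadd] at h
      have : ψ b * ψ a = ψ a * ψ b := by
        have := h
        rw [mul_add] at this
        exact add_right_cancel this
      exact hb (by rw [hb', this])
    · rw [hsum, hadd] at h
      have : ψ a * ψ c = ψ c * ψ a := by
        rw [add_mul] at h
        exact add_left_cancel h
      exact hc (by rw [hc', this])
  -- step 2
  by_contra hcon
  push_neg at hcon
  obtain ⟨⟨a, b, hab⟩, ⟨c, d, hcd⟩⟩ := hcon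
  have hQa : ∀ e : R, ψ (a*e) = ψ e * ψ a := by
    rcases step1 a with h | h
    · exact absurd (h b) hab
    · exact h
  have hPc : ∀ e : R, ψ (c*e) = ψ c * ψ e := by
    rcases step1 c with h | h
    · exact h
    · exact absurd (h d) hcd
  rcases step1 (a + c) with h | h
  · apply hab
    have h1 := h b
    rw [show (a+c)*b = a*b + c*b by noncomm_ring, hadd, hadd, hPc b, add_mul] at h1
    have := add_right_cancel (h1.symm)
    exact this.symm
  · apply hcd
    have h1 := h d
    rw [show (a+c)*d = a*d + c*d by noncomm_ring, hadd, hadd, hQa d, mul_add] at h1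
    have := add_left_cancel h1
    rw [hPc d] at this
    -- this : ψ c * ψ d = ψ d * ψ c ; goal ψ (c*d) = ψ d * ψ c
    rw [hPc d, this]


end Herstein

theorem my_bresar2 {R S : Type*} [Ring R] [Ring S] (φ : R → S)
    (hadd : ∀ a b : R, φ (a + b) = φ a + φ b)
    (htriple : ∀ a b : R, φ (a * b * a) = φ a * φ b * φ a)
    (hsurj : Function.Surjective φ)
    (hprime : ∀ a b : S, (∀ x : S, a * x * b = 0) → a = 0 ∨ b = 0)
    (htor : ∀ a : S, a + a = 0 → a = 0) :
    (∀ a b : R, φ (a*b) = φ a * φ b) ∨ (∀ a b : R, φ (a*b) = φ b * φ a) ∨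
    (∀ a b : R, φ (a*b) = -(φ a * φ b)) ∨ (∀ a b : R, φ (a*b) = -(φ b * φ a)) := by
  set e := φ 1 with he
  have hes : ∀ s : S, e * s * e = s := by
    intro s
    obtain ⟨b, rfl⟩ := hsurj s
    have := htriple 1 b
    rw [one_mul, mul_one] at this
    exact this.symm
  have he2 : e * e = 1 := by
    have := hes 1
    rwa [mul_one] at this
  have hcen : ∀ s : S, e * s = s * e := by
    intro s
    conv_lhs => rw [← hes s]
    calc e * (e * s * e) = (e * e) * s * e := by noncomm_ring
      _ = s * e := by rw [he2, one_mul]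
  have hside : ∀ x : S, (e - 1) * x * (e + 1) = 0 := by
    intro x
    calc (e - 1) * x * (e + 1) = e * x * e + e * x - x * e - x := by noncomm_ring
      _ = x + x * e - x * e - x := by rw [hes x, hcen x]
      _ = 0 := by abel
  have heor : e = 1 ∨ e = -1 := by
    rcases hprime (e - 1) (e + 1) hside with h | h
    · left; rwa [sub_eq_zero] at h
    · right; exact eq_neg_of_add_eq_zero_left h
  rcases heor with he1 | hem
  · rcases my_bresar φ hadd (by rw [← he]; exact he1) htriple hsurj hprime htor with h | h
    · exact Or.inl h
    · exact Or.inr (Or.inl h)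
  · -- e = -1 ; use ψ = -φ
    set ψ : R → S := fun a => -(φ a) with hψ
    have hψadd : ∀ a b : R, ψ (a + b) = ψ a + ψ b := by
      intro a b; simp only [hψ, hadd]; abel
    have hψone : ψ 1 = 1 := by simp [hψ, ← he, hem]
    have hψtriple : ∀ a b : R, ψ (a * b * a) = ψ a * ψ b * ψ a := by
      intro a b; simp only [hψ, htriple]; noncomm_ring
    have hψsurj : Function.Surjective ψ := by
      intro s; obtain ⟨a, ha⟩ := hsurj (-s)
      exact ⟨a, by simp [hψ, ha]⟩
    rcases my_bresar ψ hψadd hψone hψtriple hψsurj hprime htor with h | h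
    · refine Or.inr (Or.inr (Or.inl fun a b => ?_))
      have := h a b
      simp only [hψ] at this
      -- -(φ (a*b)) = (-(φ a)) * (-(φ b)) = φ a * φ b
      have h2 : -(φ (a*b)) = φ a * φ b := by rw [this]; noncomm_ring
      rw [← h2, neg_neg]
    · refine Or.inr (Or.inr (Or.inr fun a b => ?_))
      have := h a b
      simp only [hψ] at this
      have h2 : -(φ (a*b)) = φ b * φ a := by rw [this]; noncomm_ring
      rw [← h2, neg_neg]


/-- A standard operator algebra on a complex Banach space: a subalgebra of the
bounded operators containing all finite-rank operators. -/
def IsStandardOpAlg {X : Type*} [NormedAddCommGroup X] [NormedSpace ℂ X]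
    (S : Subalgebra ℂ (X →L[ℂ] X)) : Prop :=
  ∀ T : X →L[ℂ] X, FiniteDimensional ℂ (LinearMap.range (T : X →ₗ[ℂ] X)) → T ∈ S

theorem std_prime {Y : Type*} [NormedAddCommGroup Y] [NormedSpace ℂ Y] [CompleteSpace Y]
    (ℬ : Subalgebra ℂ (Y →L[ℂ] Y)) (hℬ : IsStandardOpAlg ℬ)
    (A B : ℬ) (hAB : ∀ T : ℬ, A * T * B = 0) : A = 0 ∨ B = 0 := by
  by_contra hcon
  push_neg at hcon
  obtain ⟨hA, hB⟩ := hcon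
  have hA' : (A : Y →L[ℂ] Y) ≠ 0 := fun h => hA (Subtype.ext h)
  have hB' : (B : Y →L[ℂ] Y) ≠ 0 := fun h => hB (Subtype.ext h)
  obtain ⟨y, hy⟩ : ∃ y, (A : Y →L[ℂ] Y) y ≠ 0 := by
    by_contra hc; push_neg at hc
    exact hA' (by ext v; simp [hc v])
  obtain ⟨x, hx⟩ : ∃ x, (B : Y →L[ℂ] Y) x ≠ 0 := by
    by_contra hc; push_neg at hc
    exact hB' (by ext v; simp [hc v])
  obtain ⟨g, hg1, hg2⟩ := exists_dual_vector ℂ ((B : Y →L[ℂ] Y) x) (norm_ne_zero_iff.mpr hx)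
  set c : ℂ := (‖(B : Y →L[ℂ] Y) x‖ : ℂ)⁻¹ with hc
  set T : Y →L[ℂ] Y := (c • g).smulRight y with hT
  have hTapp : ∀ v, T v = (c * g v) • y := by
    intro v; simp [hT, ContinuousLinearMap.smulRight_apply]
  have hTmem : T ∈ ℬ := by
    apply hℬ
    have hle : LinearMap.range (T : Y →ₗ[ℂ] Y) ≤ ℂ ∙ y := by
      rintro w ⟨v, rfl⟩
      have : (T : Y →ₗ[ℂ] Y) v = (c * g v) • y := hTapp v
      rw [this]
      exact Submodule.smul_mem _ _ (Submodule.mem_span_singleton_self y)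
    have : FiniteDimensional ℂ (ℂ ∙ y : Submodule ℂ Y) := by infer_instance
    exact Submodule.finiteDimensional_of_le hle
  have h0 := hAB ⟨T, hTmem⟩
  have h0' : (A : Y →L[ℂ] Y) * T * (B : Y →L[ℂ] Y) = 0 := by
    have := congrArg (Subtype.val) h0
    simpa using this
  have happ := congrFun (congrArg DFunLike.coe h0') x
  rw [ContinuousLinearMap.mul_apply, ContinuousLinearMap.mul_apply] at happ
  rw [hTapp] at happ
  rw [map_smul, ContinuousLinearMap.zero_apply] at happ
  rcases smul_eq_zero.mp happ with h | h
  · rcases mul_eq_zero.mp h with h' | h'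
    · exact (inv_ne_zero (by exact_mod_cast norm_ne_zero_iff.mpr hx)) (hc ▸ h')
    · rw [hg2] at h'
      exact (by exact_mod_cast norm_ne_zero_iff.mpr hx : ((‖(B : Y →L[ℂ] Y) x‖ : ℂ)) ≠ 0) h'
  · exact hy h

theorem stmt12 {X Y : Type*} [NormedAddCommGroup X] [NormedSpace ℂ X] [CompleteSpace X]
    [NormedAddCommGroup Y] [NormedSpace ℂ Y] [CompleteSpace Y]
    (𝒜 : Subalgebra ℂ (X →L[ℂ] X)) (ℬ : Subalgebra ℂ (Y →L[ℂ] Y))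
    (h𝒜 : IsStandardOpAlg 𝒜) (hℬ : IsStandardOpAlg ℬ)
    (φ : 𝒜 → ℬ) (hbij : Function.Bijective φ)
    (hadd : ∀ A B : 𝒜, φ (A + B) = φ A + φ B)
    (hmul : ∀ A B : 𝒜, φ (A * B * A) = φ A * φ B * φ A) :
    (∀ A B : 𝒜, φ (A * B) = φ A * φ B) ∨
    (∀ A B : 𝒜, φ (A * B) = φ B * φ A) ∨
    (∀ A B : 𝒜, φ (A * B) = -(φ A * φ B)) ∨
    (∀ A B : 𝒜, φ (A * B) = -(φ B * φ A)) := by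
  have hprime : ∀ a b : ℬ, (∀ x : ℬ, a * x * b = 0) → a = 0 ∨ b = 0 :=
    fun a b h => std_prime ℬ hℬ a b h
  have htor : ∀ a : ℬ, a + a = 0 → a = 0 := by
    intro a h
    have h2 : (2 : ℂ) • a = 0 := by rw [two_smul]; exact h
    calc a = ((2:ℂ)⁻¹ * 2) • a := by norm_num
      _ = (2:ℂ)⁻¹ • ((2:ℂ) • a) := by rw [mul_smul]
      _ = 0 := by rw [h2, smul_zero]
  exact my_bresar2 φ hadd hmul hbij.2 hprime htor
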